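/- In the setting of the GAME optimality inequality — X = W★ + E, Ω ⊆ [n]×[m], meta-categories c ∈ 𝒞 with row sets I_c covering [n] and row multiplicity κ(i) := |{c : i ∈ I_c}| ≥ 1, regularization weights λ_c ≥ 0, Ŵ a minimizer of W ↦ (1/2)‖P_Ω(X − W)‖_F² + Σ_c λ_c‖W_c‖_* over a feasible set containing W★, and Δ := Ŵ − W★ — let Ẽ^{(c)} ∈ ℝ^{|I_c|×m} have entries [P_Ω(E)]_{ij}/κ(i) for i ∈ I_c, j ∈ [m]. For each c, let W★_c have rank r_c with thin SVD defining projections P_{M_c⊥}(B) := P_{U_c⊥} B P_{V_c⊥} and P_{M_c}(B) := B − P_{M_c⊥}(B), where U_c, V_c span the column and row spaces of W★_c. If λ_c ≥ 2‖Ẽ^{(c)}‖_op for every c ∈ 𝒞, then both (i) Σ_{c∈𝒞} λ_c ‖P_{M_c⊥}(Δ_c)‖_* ≤ 3 Σ_{c∈𝒞} λ_c ‖P_{M_c}(Δ_c)‖_*, and (ii) (1/2)‖P_Ω(Δ)‖_F² ≤ (3/2) Σ_{c∈𝒞} λ_c ‖P_{M_c}(Δ_c)‖_*. -/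

import Mathlib

open Matrix

set_option linter.unusedSectionVars false
set_option maxHeartbeats 1000000

theorem Matrix.isHermitian_transpose_mul_self {m n α : Type*} [Fintype m]
    [NonUnitalCommSemiring α] [StarRing α] [TrivialStar α] (A : Matrix m n α) :
    (Aᵀ * A).IsHermitian := by
  rw [IsHermitian, conjTranspose_eq_transpose_of_trivial, transpose_mul, transpose_transpose]

/-- The nuclear norm of a real matrix: the sum of its singular values. -/
noncomputable def nuclearNorm {p m : Type*} [Fintype p] [Fintype m] [DecidableEq m]
    (A : Matrix p m ℝ) : ℝ :=
  ∑ i, Real.sqrt ((Matrix.isHermitian_transpose_mul_self A).eigenvalues i)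

/-- The operator (spectral) norm of a real matrix: the largest singular value. -/
noncomputable def opNorm {p m : Type*} [Fintype p] [Fintype m] [DecidableEq m]
    (A : Matrix p m ℝ) : ℝ :=
  ⨆ i, Real.sqrt ((Matrix.isHermitian_transpose_mul_self A).eigenvalues i)

/-- The Frobenius norm of a real matrix. -/
noncomputable def frobNorm {p m : Type*} [Fintype p] [Fintype m]
    (A : Matrix p m ℝ) : ℝ :=
  Real.sqrt (∑ i, ∑ j, (A i j) ^ 2)

/-- The row multiplicity `κ(i) = |{c : i ∈ I_c}|`. -/
def kappa {n : ℕ} {C : Type*} [Fintype C] (I : C → Finset (Fin n)) (i : Fin n) : ℕ :=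
  (Finset.univ.filter fun c => i ∈ I c).card

/-- Row submatrix `W_c = W[I_c, :]`. -/
def rowSub {n m : ℕ} (I : Finset (Fin n)) (W : Matrix (Fin n) (Fin m) ℝ) :
    Matrix I (Fin m) ℝ :=
  Matrix.of fun i j => W i.1 j

/-- The projection `P_Ω` that zeros out all entries outside `Ω`. -/
def projObs {n m : ℕ} (Ω : Finset (Fin n × Fin m)) (A : Matrix (Fin n) (Fin m) ℝ) :
    Matrix (Fin n) (Fin m) ℝ :=
  Matrix.of fun i j => if (i, j) ∈ Ω then A i j else 0

/-- The GAME objective `W ↦ (1/2)‖P_Ω(X − W)‖_F² + Σ_c λ_c ‖W_c‖_*`. -/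
noncomputable def gameObj {n m : ℕ} {C : Type*} [Fintype C]
    (Ω : Finset (Fin n × Fin m)) (X : Matrix (Fin n) (Fin m) ℝ)
    (I : C → Finset (Fin n)) (lam : C → ℝ) (W : Matrix (Fin n) (Fin m) ℝ) : ℝ :=
  (1 / 2) * frobNorm (projObs Ω (X - W)) ^ 2 +
    ∑ c : C, lam c * nuclearNorm (rowSub (I c) W)

namespace GameAux
variable {p m : Type*} [Fintype p] [Fintype m] [DecidableEq m]

noncomputable def sval (A : Matrix p m ℝ) (i : m) : ℝ :=
  Real.sqrt ((Matrix.isHermitian_transpose_mul_self A).eigenvalues i)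

noncomputable def rsv (A : Matrix p m ℝ) (i : m) : m → ℝ :=
  (Matrix.isHermitian_transpose_mul_self A).eigenvectorBasis i

noncomputable def lsv (A : Matrix p m ℝ) (i : m) : p → ℝ :=
  (sval A i)⁻¹ • (A *ᵥ rsv A i)

lemma eig_nonneg (A : Matrix p m ℝ) (i : m) :
    0 ≤ (Matrix.isHermitian_transpose_mul_self A).eigenvalues i := by
  have := Matrix.posSemidef_conjTranspose_mul_self A
  rw [conjTranspose_eq_transpose_of_trivial] at this
  exact this.eigenvalues_nonneg i

lemma sq_sval (A : Matrix p m ℝ) (i : m) :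
    sval A i ^ 2 = (Matrix.isHermitian_transpose_mul_self A).eigenvalues i :=
  Real.sq_sqrt (eig_nonneg A i)

lemma sval_nonneg (A : Matrix p m ℝ) (i : m) : 0 ≤ sval A i := Real.sqrt_nonneg _

lemma nuclearNorm_eq (A : Matrix p m ℝ) : nuclearNorm A = ∑ i, sval A i := rfl
lemma opNorm_eq (A : Matrix p m ℝ) : opNorm A = ⨆ i, sval A i := rfl

lemma nuclearNorm_nonneg (A : Matrix p m ℝ) : 0 ≤ nuclearNorm A :=
  Finset.sum_nonneg fun i _ => sval_nonneg A i

lemma opNorm_nonneg (A : Matrix p m ℝ) : 0 ≤ opNorm A :=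
  Real.iSup_nonneg fun i => sval_nonneg A i

lemma sval_le_opNorm (A : Matrix p m ℝ) (i : m) : sval A i ≤ opNorm A :=
  le_ciSup (Set.Finite.bddAbove (Set.finite_range _)) i

lemma rsv_dot (A : Matrix p m ℝ) (i j : m) :
    rsv A i ⬝ᵥ rsv A j = if i = j then 1 else 0 := by
  have h := orthonormal_iff_ite.mp
    (Matrix.isHermitian_transpose_mul_self A).eigenvectorBasis.orthonormal i j
  simpa [rsv, PiLp.inner_apply, dotProduct, RCLike.inner_apply, mul_comm] using h

lemma rsv_expand (A : Matrix p m ℝ) (x : m → ℝ) :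
    ∑ j, (rsv A j ⬝ᵥ x) • rsv A j = x := by
  set b := (Matrix.isHermitian_transpose_mul_self A).eigenvectorBasis
  have h := b.sum_repr' (WithLp.toLp 2 x : EuclideanSpace ℝ m)
  have h2 : ∀ j, (inner ℝ (b j) (WithLp.toLp 2 x : EuclideanSpace ℝ m) : ℝ) = rsv A j ⬝ᵥ x := by
    intro j; simp [rsv, b, PiLp.inner_apply, dotProduct, RCLike.inner_apply, mul_comm]
  have h3 := congrArg (WithLp.ofLp (p := 2)) h
  simp only [h2, WithLp.ofLp_sum, WithLp.ofLp_smul] at h3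
  exact h3

lemma ATA_rsv (A : Matrix p m ℝ) (i : m) :
    (Aᵀ * A) *ᵥ rsv A i
      = (Matrix.isHermitian_transpose_mul_self A).eigenvalues i • rsv A i :=
  (Matrix.isHermitian_transpose_mul_self A).mulVec_eigenvectorBasis i

lemma mulVec_rsv_dot (A : Matrix p m ℝ) (i j : m) :
    (A *ᵥ rsv A i) ⬝ᵥ (A *ᵥ rsv A j) = if i = j then sval A j ^ 2 else 0 := by
  have h1 : (A *ᵥ rsv A i) ⬝ᵥ (A *ᵥ rsv A j) = rsv A i ⬝ᵥ ((Aᵀ * A) *ᵥ rsv A j) := by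
    rw [← mulVec_mulVec, dotProduct_mulVec (rsv A i) Aᵀ, vecMul_transpose]
  rw [h1, ATA_rsv, dotProduct_smul, rsv_dot, sq_sval]
  rcases eq_or_ne i j with rfl | hne
  · simp
  · simp [hne]

lemma mulVec_rsv_eq_zero (A : Matrix p m ℝ) {i : m} (h : sval A i = 0) :
    A *ᵥ rsv A i = 0 := by
  have h2 := mulVec_rsv_dot A i i
  simp only [if_pos rfl, h] at h2
  rw [← dotProduct_self_eq_zero (v := A *ᵥ rsv A i)]
  simpa using h2

lemma Avec_eq (A : Matrix p m ℝ) (i : m) : A *ᵥ rsv A i = sval A i • lsv A i := by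
  by_cases h : sval A i = 0
  · simp [h, mulVec_rsv_eq_zero A h]
  · unfold lsv; rw [smul_smul, mul_inv_cancel₀ h, one_smul]

lemma lsv_eq_zero (A : Matrix p m ℝ) {i : m} (h : sval A i = 0) : lsv A i = 0 := by
  simp [lsv, mulVec_rsv_eq_zero A h]

lemma lsv_dot (A : Matrix p m ℝ) (i j : m) :
    lsv A i ⬝ᵥ lsv A j = if i = j then (if sval A i = 0 then 0 else 1) else 0 := by
  unfold lsv
  rw [smul_dotProduct, dotProduct_smul, mulVec_rsv_dot]
  rcases eq_or_ne i j with rfl | h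
  · by_cases hz : sval A i = 0
    · simp [hz]
    · simp only [if_pos rfl, if_neg hz, smul_eq_mul, sq]
      field_simp
      simp
  · simp [h]

variable {ι : Type*}


lemma sum_dotProduct' (s : Finset ι) (f : ι → p → ℝ) (w : p → ℝ) :
    (∑ j ∈ s, f j) ⬝ᵥ w = ∑ j ∈ s, f j ⬝ᵥ w := by
  simp only [dotProduct, Finset.sum_apply, Finset.sum_mul]
  exact Finset.sum_comm

lemma dotProduct_sum' (s : Finset ι) (w : p → ℝ) (f : ι → p → ℝ) :
    w ⬝ᵥ (∑ j ∈ s, f j) = ∑ j ∈ s, w ⬝ᵥ f j := by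
  simp only [dotProduct, Finset.sum_apply, Finset.mul_sum]
  exact Finset.sum_comm

lemma dot_sum_sum (f g : m → ℝ) (u w : m → p → ℝ) :
    (∑ j, f j • u j) ⬝ᵥ (∑ l, g l • w l) = ∑ j, ∑ l, f j * g l * (u j ⬝ᵥ w l) := by
  rw [sum_dotProduct']
  refine Finset.sum_congr rfl fun j _ => ?_
  rw [dotProduct_sum']
  refine Finset.sum_congr rfl fun l _ => ?_
  rw [smul_dotProduct, dotProduct_smul, smul_eq_mul, smul_eq_mul]
  ring

lemma mulVec_sum_smul (M : Matrix p m ℝ) (f : m → ℝ) (v : m → m → ℝ) :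
    M *ᵥ (∑ j, f j • v j) = ∑ j, f j • (M *ᵥ v j) := by
  ext i
  simp only [mulVec]
  rw [dotProduct_sum']
  simp only [Finset.sum_apply, Pi.smul_apply, smul_eq_mul]
  exact Finset.sum_congr rfl fun j _ => by rw [dotProduct_smul]; rfl

lemma dot_le_sqrt (x y : p → ℝ) :
    x ⬝ᵥ y ≤ Real.sqrt (x ⬝ᵥ x) * Real.sqrt (y ⬝ᵥ y) := by
  have h := Finset.sum_mul_sq_le_sq_mul_sq Finset.univ x y
  have h2 : x ⬝ᵥ y ≤ Real.sqrt ((∑ i, x i ^ 2) * (∑ i, y i ^ 2)) := by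
    calc x ⬝ᵥ y ≤ |x ⬝ᵥ y| := le_abs_self _
      _ = Real.sqrt ((x ⬝ᵥ y) ^ 2) := (Real.sqrt_sq_eq_abs _).symm
      _ ≤ _ := Real.sqrt_le_sqrt (by simpa [dotProduct] using h)
  rw [Real.sqrt_mul (by positivity)] at h2
  simpa [dotProduct, sq] using h2

lemma parseval (A : Matrix p m ℝ) (x : m → ℝ) :
    ∑ j, (rsv A j ⬝ᵥ x) ^ 2 = x ⬝ᵥ x := by
  conv_rhs => rw [← rsv_expand A x]
  rw [dot_sum_sum]
  rw [Finset.sum_congr rfl fun j (_ : j ∈ Finset.univ) => Finset.sum_congr rfl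
    fun l (_ : l ∈ Finset.univ) => by rw [rsv_dot]]
  simp [Finset.sum_ite_eq', sq]

lemma norm_mulVec_le (A : Matrix p m ℝ) (x : m → ℝ) :
    (A *ᵥ x) ⬝ᵥ (A *ᵥ x) ≤ opNorm A ^ 2 * (x ⬝ᵥ x) := by
  have hx : A *ᵥ x = ∑ j, (rsv A j ⬝ᵥ x) • (A *ᵥ rsv A j) := by
    conv_lhs => rw [← rsv_expand A x]
    exact mulVec_sum_smul A _ _
  rw [hx, dot_sum_sum]
  rw [Finset.sum_congr rfl fun j (_ : j ∈ Finset.univ) => Finset.sum_congr rfl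
    fun l (_ : l ∈ Finset.univ) => by rw [mulVec_rsv_dot]]
  have key : ∀ j : m, (∑ l, (rsv A j ⬝ᵥ x) * (rsv A l ⬝ᵥ x) *
      (if j = l then sval A l ^ 2 else 0)) = (rsv A j ⬝ᵥ x) ^ 2 * sval A j ^ 2 := by
    intro j
    rw [Finset.sum_eq_single j]
    · simp [sq]
    · intro l _ hl; simp [Ne.symm hl]
    · simp [sq]
  rw [Finset.sum_congr rfl fun j _ => key j]
  calc ∑ j, (rsv A j ⬝ᵥ x) ^ 2 * sval A j ^ 2
      ≤ ∑ j, (rsv A j ⬝ᵥ x) ^ 2 * opNorm A ^ 2 := by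
        refine Finset.sum_le_sum fun j _ => ?_
        refine mul_le_mul_of_nonneg_left ?_ (sq_nonneg _)
        exact pow_le_pow_left₀ (sval_nonneg A j) (sval_le_opNorm A j) 2
    _ = opNorm A ^ 2 * (x ⬝ᵥ x) := by
        rw [← Finset.sum_mul, parseval]; ring

lemma opNorm_le_of (A : Matrix p m ℝ) (c : ℝ) (hc : 0 ≤ c)
    (h : ∀ x, (A *ᵥ x) ⬝ᵥ (A *ᵥ x) ≤ c ^ 2 * (x ⬝ᵥ x)) : opNorm A ≤ c := by
  rcases isEmpty_or_nonempty m with hm | hm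
  · rw [opNorm_eq, Real.iSup_of_isEmpty]; exact hc
  · rw [opNorm_eq]
    refine ciSup_le fun i => ?_
    have h2 := h (rsv A i)
    rw [mulVec_rsv_dot, if_pos rfl, rsv_dot, if_pos rfl, mul_one] at h2
    nlinarith [sval_nonneg A i]

noncomputable def ip (A B : Matrix p m ℝ) : ℝ := ∑ i, ∑ j, A i j * B i j

lemma ip_comm (A B : Matrix p m ℝ) : ip A B = ip B A := by
  unfold ip; exact Finset.sum_congr rfl fun i _ => Finset.sum_congr rfl fun j _ => mul_comm _ _


lemma rsv_sum_dot (C : Matrix p m ℝ) (k l : m) :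
    ∑ j, rsv C j k * rsv C j l = if k = l then 1 else 0 := by
  classical
  set V : Matrix m m ℝ := Matrix.of fun j k => rsv C j k with hVdef
  have hV : V * Vᵀ = 1 := by
    ext a b
    simp only [mul_apply, transpose_apply, one_apply, hVdef, Matrix.of_apply]
    simpa [dotProduct] using rsv_dot C a b
  have hV2 := mul_eq_one_comm.mp hV
  have h := congrFun (congrFun hV2 k) l
  simpa [mul_apply, transpose_apply, one_apply, hVdef] using h

lemma sum_quad (C : Matrix p m ℝ) (M : Matrix m m ℝ) :
    ∑ j, rsv C j ⬝ᵥ (M *ᵥ rsv C j) = ∑ k, M k k := by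
  have h1 : ∀ j, rsv C j ⬝ᵥ (M *ᵥ rsv C j) = ∑ k, ∑ l, M k l * (rsv C j k * rsv C j l) := by
    intro j
    simp only [dotProduct, mulVec, Finset.mul_sum]
    exact Finset.sum_congr rfl fun k _ => Finset.sum_congr rfl fun l _ => by ring
  simp only [h1]
  rw [Finset.sum_comm]
  refine Finset.sum_congr rfl fun k _ => ?_
  rw [Finset.sum_comm]
  have h2 : ∀ l, ∑ j, M k l * (rsv C j k * rsv C j l) = M k l * (if k = l then 1 else 0) := by
    intro l; rw [← Finset.mul_sum, rsv_sum_dot]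
  simp only [h2]
  simp [Finset.sum_ite_eq']

lemma ip_eq_trace (A B : Matrix p m ℝ) : ip A B = ∑ k, (Aᵀ * B) k k := by
  unfold ip
  rw [Finset.sum_comm]
  simp [mul_apply, transpose_apply]

lemma dot_mulVec_pair (A B : Matrix p m ℝ) (x y : m → ℝ) :
    (A *ᵥ x) ⬝ᵥ (B *ᵥ y) = x ⬝ᵥ ((Aᵀ * B) *ᵥ y) := by
  rw [← mulVec_mulVec, dotProduct_mulVec x Aᵀ, vecMul_transpose]

lemma ip_eq_sum_dot (A B C : Matrix p m ℝ) :
    ip A B = ∑ j, (A *ᵥ rsv C j) ⬝ᵥ (B *ᵥ rsv C j) := by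
  rw [ip_eq_trace, ← sum_quad C (Aᵀ * B)]
  exact Finset.sum_congr rfl fun j _ => (dot_mulVec_pair A B _ _).symm

lemma ip_le (A B : Matrix p m ℝ) : ip A B ≤ opNorm A * nuclearNorm B := by
  rw [ip_eq_sum_dot A B B, nuclearNorm_eq, Finset.mul_sum]
  refine Finset.sum_le_sum fun j _ => ?_
  have h1 : (A *ᵥ rsv B j) ⬝ᵥ (A *ᵥ rsv B j) ≤ opNorm A ^ 2 * 1 := by
    have h := norm_mulVec_le A (rsv B j)
    rwa [rsv_dot, if_pos rfl] at h
  have h2 : (B *ᵥ rsv B j) ⬝ᵥ (B *ᵥ rsv B j) = sval B j ^ 2 := by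
    rw [mulVec_rsv_dot, if_pos rfl]
  have s1 : Real.sqrt ((A *ᵥ rsv B j) ⬝ᵥ (A *ᵥ rsv B j)) ≤ opNorm A := by
    calc Real.sqrt ((A *ᵥ rsv B j) ⬝ᵥ (A *ᵥ rsv B j))
        ≤ Real.sqrt (opNorm A ^ 2 * 1) := Real.sqrt_le_sqrt h1
      _ = opNorm A := by rw [mul_one, Real.sqrt_sq (opNorm_nonneg A)]
  have s2 : Real.sqrt ((B *ᵥ rsv B j) ⬝ᵥ (B *ᵥ rsv B j)) = sval B j := by
    rw [h2, Real.sqrt_sq (sval_nonneg B j)]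
  calc (A *ᵥ rsv B j) ⬝ᵥ (B *ᵥ rsv B j)
      ≤ Real.sqrt ((A *ᵥ rsv B j) ⬝ᵥ (A *ᵥ rsv B j)) *
        Real.sqrt ((B *ᵥ rsv B j) ⬝ᵥ (B *ᵥ rsv B j)) := dot_le_sqrt _ _
    _ ≤ opNorm A * sval B j := by
        rw [s2]; exact mul_le_mul_of_nonneg_right s1 (sval_nonneg B j)


lemma ip_add_right (A B C : Matrix p m ℝ) : ip A (B + C) = ip A B + ip A C := by
  unfold ip
  rw [← Finset.sum_add_distrib]
  refine Finset.sum_congr rfl fun i _ => ?_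
  rw [← Finset.sum_add_distrib]
  refine Finset.sum_congr rfl fun j _ => ?_
  simp [Matrix.add_apply]; ring

lemma ip_add_left (A B C : Matrix p m ℝ) : ip (A + B) C = ip A C + ip B C := by
  rw [ip_comm, ip_add_right, ip_comm C A, ip_comm C B]

lemma ip_zero_left (A : Matrix p m ℝ) : ip 0 A = 0 := by
  unfold ip; simp

lemma ip_mul_left (P : Matrix p p ℝ) (A Q : Matrix p m ℝ) :
    ip A (P * Q) = ip (Pᵀ * A) Q := by
  rw [ip_eq_trace, ip_eq_trace, transpose_mul, transpose_transpose, Matrix.mul_assoc]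

noncomputable def cert (X : Matrix p m ℝ) : Matrix p m ℝ :=
  Matrix.of fun i k => ∑ j, lsv X j i * rsv X j k

lemma cert_mulVec (X : Matrix p m ℝ) (x : m → ℝ) :
    cert X *ᵥ x = ∑ j, (rsv X j ⬝ᵥ x) • lsv X j := by
  ext i
  simp only [mulVec, dotProduct, cert, Matrix.of_apply, Finset.sum_apply, Pi.smul_apply,
    smul_eq_mul, Finset.sum_mul]
  rw [Finset.sum_comm]
  refine Finset.sum_congr rfl fun j _ => Finset.sum_congr rfl fun k _ => by ring

lemma cert_mulVec_rsv (X : Matrix p m ℝ) (j : m) :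
    cert X *ᵥ rsv X j = lsv X j := by
  rw [cert_mulVec]
  rw [Finset.sum_eq_single j]
  · rw [rsv_dot, if_pos rfl, one_smul]
  · intro l _ hl; rw [rsv_dot, if_neg hl, zero_smul]
  · simp

lemma cert_ip (X : Matrix p m ℝ) : ip X (cert X) = nuclearNorm X := by
  rw [ip_eq_sum_dot X (cert X) X, nuclearNorm_eq]
  refine Finset.sum_congr rfl fun j _ => ?_
  rw [cert_mulVec_rsv, Avec_eq, smul_dotProduct, lsv_dot, if_pos rfl, smul_eq_mul]
  by_cases h : sval X j = 0
  · simp [h]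
  · simp [h]

lemma cert_opNorm (X : Matrix p m ℝ) : opNorm (cert X) ≤ 1 := by
  refine opNorm_le_of _ 1 zero_le_one fun x => ?_
  rw [cert_mulVec, dot_sum_sum, one_pow, one_mul]
  have h : ∀ j l, (rsv X j ⬝ᵥ x) * (rsv X l ⬝ᵥ x) * (lsv X j ⬝ᵥ lsv X l)
      = if j = l then (rsv X j ⬝ᵥ x) ^ 2 * (if sval X j = 0 then 0 else 1) else 0 := by
    intro j l
    rw [lsv_dot]
    rcases eq_or_ne j l with rfl | hne
    · simp [sq]
    · simp [hne]
  simp only [h]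
  rw [Finset.sum_congr rfl fun j (_ : j ∈ Finset.univ) => Finset.sum_ite_eq Finset.univ j
    (fun _ => (rsv X j ⬝ᵥ x) ^ 2 * (if sval X j = 0 then 0 else 1))]
  simp only [Finset.mem_univ, if_pos]
  calc ∑ j, (rsv X j ⬝ᵥ x) ^ 2 * (if sval X j = 0 then 0 else 1)
      ≤ ∑ j, (rsv X j ⬝ᵥ x) ^ 2 := by
        refine Finset.sum_le_sum fun j _ => ?_
        by_cases hz : sval X j = 0 <;> simp [hz, sq_nonneg]
    _ = x ⬝ᵥ x := parseval X x

lemma cert_left (X : Matrix p m ℝ) (P : Matrix p p ℝ)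
    (h : ∀ y, P *ᵥ (X *ᵥ y) = 0) : P * cert X = 0 := by
  have hl : ∀ j, P *ᵥ lsv X j = 0 := by
    intro j
    unfold lsv
    rw [Matrix.mulVec_smul, h, smul_zero]
  ext i k
  simp only [mul_apply, cert, Matrix.of_apply, Matrix.zero_apply, Finset.mul_sum]
  rw [Finset.sum_comm]
  refine Finset.sum_eq_zero fun j _ => ?_
  have := congrFun (hl j) i
  simp only [mulVec, dotProduct, Pi.zero_apply] at this
  calc ∑ a, P i a * (lsv X j a * rsv X j k) = (∑ a, P i a * lsv X j a) * rsv X j k := by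
        rw [Finset.sum_mul]; exact Finset.sum_congr rfl fun a _ => by ring
    _ = 0 := by rw [this, zero_mul]

lemma cert_right (X : Matrix p m ℝ) (P : Matrix m m ℝ)
    (h : ∀ y, P *ᵥ (Xᵀ *ᵥ y) = 0) : cert X * Pᵀ = 0 := by
  have hr : ∀ j, sval X j ≠ 0 → P *ᵥ rsv X j = 0 := by
    intro j hj
    have hmu : (Matrix.isHermitian_transpose_mul_self X).eigenvalues j ≠ 0 := by
      rw [← sq_sval]; intro hc
      exact hj (pow_eq_zero_iff (n := 2) (by norm_num) |>.mp hc)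
    have hv : rsv X j = ((Matrix.isHermitian_transpose_mul_self X).eigenvalues j)⁻¹ •
        (Xᵀ *ᵥ (X *ᵥ rsv X j)) := by
      rw [mulVec_mulVec, ATA_rsv, smul_smul, inv_mul_cancel₀ hmu, one_smul]
    rw [hv, Matrix.mulVec_smul, h, smul_zero]
  ext i k
  simp only [mul_apply, transpose_apply, cert, Matrix.of_apply, Matrix.zero_apply, Finset.sum_mul]
  rw [Finset.sum_comm]
  refine Finset.sum_eq_zero fun j _ => ?_
  by_cases hz : sval X j = 0
  · simp [lsv_eq_zero X hz]
  · have := congrFun (hr j hz) k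
    simp only [mulVec, dotProduct, Pi.zero_apply] at this
    calc ∑ a, lsv X j i * rsv X j a * P k a
        = lsv X j i * ∑ a, P k a * rsv X j a := by
          rw [Finset.mul_sum]; exact Finset.sum_congr rfl fun a _ => by ring
      _ = 0 := by rw [this, mul_zero]


lemma dot_self_nonneg (v : p → ℝ) : 0 ≤ v ⬝ᵥ v :=
  Finset.sum_nonneg fun i _ => mul_self_nonneg _

lemma nuclear_triangle (A B : Matrix p m ℝ) :
    nuclearNorm (A + B) ≤ nuclearNorm A + nuclearNorm B := by
  have hQ := cert_opNorm (A + B)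
  have bound : ∀ M : Matrix p m ℝ, ip M (cert (A + B)) ≤ nuclearNorm M := by
    intro M
    calc ip M (cert (A + B)) = ip (cert (A + B)) M := ip_comm _ _
      _ ≤ opNorm (cert (A + B)) * nuclearNorm M := ip_le _ _
      _ ≤ 1 * nuclearNorm M := mul_le_mul_of_nonneg_right hQ (nuclearNorm_nonneg M)
      _ = nuclearNorm M := one_mul _
  calc nuclearNorm (A + B) = ip (A + B) (cert (A + B)) := (cert_ip _).symm
    _ = ip A (cert (A + B)) + ip B (cert (A + B)) := ip_add_left _ _ _
    _ ≤ nuclearNorm A + nuclearNorm B := add_le_add (bound A) (bound B)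

lemma eig_congr {M N : Matrix m m ℝ} (hM : M.IsHermitian) (hN : N.IsHermitian)
    (h : M = N) : hM.eigenvalues = hN.eigenvalues := by subst h; rfl

lemma nuclear_congr {A B : Matrix p m ℝ} (h : Aᵀ * A = Bᵀ * B) :
    nuclearNorm A = nuclearNorm B := by
  unfold nuclearNorm
  rw [eig_congr (Matrix.isHermitian_transpose_mul_self A)
    (Matrix.isHermitian_transpose_mul_self B) h]

lemma nuclear_neg (A : Matrix p m ℝ) : nuclearNorm (-A) = nuclearNorm A :=
  nuclear_congr (by simp)

lemma nuclear_split [DecidableEq p] (W Z : Matrix p m ℝ) (Pu : Matrix p p ℝ)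
    (Pv : Matrix m m ℝ)
    (hus : Puᵀ = Pu) (hui : Pu * Pu = Pu) (hvs : Pvᵀ = Pv) (hvi : Pv * Pv = Pv)
    (hW1 : Pu * W = 0) (hW2 : W * Pv = 0) (hZ1 : Pu * Z = Z) (hZ2 : Z * Pv = Z) :
    nuclearNorm W + nuclearNorm Z ≤ nuclearNorm (W + Z) := by
  set Q1 := cert W with hQ1def
  set Q2 := cert Z with hQ2def
  have hQ1l : Pu * Q1 = 0 := cert_left W Pu fun y => by
    rw [mulVec_mulVec, hW1, zero_mulVec]
  have hPvWt : Pv * Wᵀ = 0 := by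
    have h := congrArg transpose hW2
    rwa [transpose_mul, hvs, transpose_zero] at h
  have hQ1r : Q1 * Pv = 0 := by
    have h := cert_right W Pv fun y => by rw [mulVec_mulVec, hPvWt, zero_mulVec]
    rwa [hvs] at h
  have hQ2l : Pu * Q2 = Q2 := by
    have h0 : (1 - Pu) * Q2 = 0 := cert_left Z _ fun y => by
      rw [mulVec_mulVec, Matrix.sub_mul, Matrix.one_mul, hZ1, sub_self, zero_mulVec]
    rw [Matrix.sub_mul, Matrix.one_mul, sub_eq_zero] at h0
    exact h0.symm
  have hPvZt : Pv * Zᵀ = Zᵀ := by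
    have h := congrArg transpose hZ2
    rwa [transpose_mul, hvs] at h
  have hQ2r : Q2 * Pv = Q2 := by
    have h := cert_right Z (1 - Pv) fun y => by
      rw [mulVec_mulVec, Matrix.sub_mul, Matrix.one_mul, hPvZt, sub_self, zero_mulVec]
    rw [transpose_sub, transpose_one, hvs, Matrix.mul_sub, Matrix.mul_one, sub_eq_zero] at h
    exact h.symm
  have key1 : ip W Q2 = 0 := by
    rw [← hQ2l, ip_mul_left, hus, hW1, ip_zero_left]
  have key2 : ip Z Q1 = 0 := by
    rw [ip_comm, ← hZ1, ip_mul_left, hus, hQ1l, ip_zero_left]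
  have hop : opNorm (Q1 + Q2) ≤ 1 := by
    refine opNorm_le_of _ 1 zero_le_one fun x => ?_
    set a := Q1 *ᵥ x with ha
    set b := Q2 *ᵥ x with hb
    have hsum : (Q1 + Q2) *ᵥ x = a + b := Matrix.add_mulVec _ _ _
    have hPub : Pu *ᵥ b = b := by rw [hb, mulVec_mulVec, hQ2l]
    have hPua : Pu *ᵥ a = 0 := by rw [ha, mulVec_mulVec, hQ1l, zero_mulVec]
    have hab : a ⬝ᵥ b = 0 := by
      rw [← hPub, dotProduct_mulVec, ← hus, vecMul_transpose, hPua, zero_dotProduct]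
    have haa : a = Q1 *ᵥ ((1 - Pv) *ᵥ x) := by
      rw [mulVec_mulVec, Matrix.mul_sub, Matrix.mul_one, hQ1r, sub_zero, ha]
    have hbb : b = Q2 *ᵥ (Pv *ᵥ x) := by
      rw [mulVec_mulVec, hQ2r, hb]
    have hopsq : ∀ M : Matrix p m ℝ, opNorm (cert M) ^ 2 ≤ 1 := fun M =>
      pow_le_one₀ (opNorm_nonneg _) (cert_opNorm M)
    have ha2 : a ⬝ᵥ a ≤ ((1 - Pv) *ᵥ x) ⬝ᵥ ((1 - Pv) *ᵥ x) := by
      rw [haa]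
      calc Q1 *ᵥ ((1 - Pv) *ᵥ x) ⬝ᵥ (Q1 *ᵥ ((1 - Pv) *ᵥ x))
          ≤ opNorm Q1 ^ 2 * (((1 - Pv) *ᵥ x) ⬝ᵥ ((1 - Pv) *ᵥ x)) := norm_mulVec_le _ _
        _ ≤ 1 * (((1 - Pv) *ᵥ x) ⬝ᵥ ((1 - Pv) *ᵥ x)) :=
            mul_le_mul_of_nonneg_right (hopsq W) (dot_self_nonneg _)
        _ = _ := one_mul _
    have hb2 : b ⬝ᵥ b ≤ (Pv *ᵥ x) ⬝ᵥ (Pv *ᵥ x) := by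
      rw [hbb]
      calc Q2 *ᵥ (Pv *ᵥ x) ⬝ᵥ (Q2 *ᵥ (Pv *ᵥ x))
          ≤ opNorm Q2 ^ 2 * ((Pv *ᵥ x) ⬝ᵥ (Pv *ᵥ x)) := norm_mulVec_le _ _
        _ ≤ 1 * ((Pv *ᵥ x) ⬝ᵥ (Pv *ᵥ x)) :=
            mul_le_mul_of_nonneg_right (hopsq Z) (dot_self_nonneg _)
        _ = _ := one_mul _
    have pyth : ((1 - Pv) *ᵥ x) ⬝ᵥ ((1 - Pv) *ᵥ x) + (Pv *ᵥ x) ⬝ᵥ (Pv *ᵥ x) = x ⬝ᵥ x := by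
      set w := Pv *ᵥ x with hw
      have h1 : (1 - Pv) *ᵥ x = x - w := by rw [Matrix.sub_mulVec, Matrix.one_mulVec, hw]
      have hww : w ⬝ᵥ w = x ⬝ᵥ w := by
        rw [hw, dot_mulVec_pair, hvs, hvi]
      rw [h1, sub_dotProduct, dotProduct_sub, dotProduct_sub]
      have hcomm : w ⬝ᵥ x = x ⬝ᵥ w := dotProduct_comm _ _
      linarith
    rw [hsum, add_dotProduct, dotProduct_add, dotProduct_add, one_pow, one_mul]
    have hba : b ⬝ᵥ a = 0 := by rw [dotProduct_comm]; exact hab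
    linarith
  calc nuclearNorm W + nuclearNorm Z = ip W Q1 + ip Z Q2 := by rw [cert_ip, cert_ip]
    _ = ip (W + Z) (Q1 + Q2) := by
        rw [ip_add_left, ip_add_right, ip_add_right, key1, key2]; ring
    _ = ip (Q1 + Q2) (W + Z) := ip_comm _ _
    _ ≤ opNorm (Q1 + Q2) * nuclearNorm (W + Z) := ip_le _ _
    _ ≤ 1 * nuclearNorm (W + Z) := mul_le_mul_of_nonneg_right hop (nuclearNorm_nonneg _)
    _ = nuclearNorm (W + Z) := one_mul _

end GameAux

lemma frobSq' {n m : ℕ} (M : Matrix (Fin n) (Fin m) ℝ) :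
    frobNorm M ^ 2 = ∑ i, ∑ j, M i j ^ 2 :=
  Real.sq_sqrt (Finset.sum_nonneg fun i _ => Finset.sum_nonneg fun j _ => sq_nonneg _)

open GameAux in
/-- **Group cone constraint.** In the GAME setting with `X = W★ + E`, overlapping
row blocks `I_c` covering `[n]`, multiplicity-reweighted noise matrices
`Ẽ^{(c)}` with entries `[P_Ω(E)]_{ij}/κ(i)` for `i ∈ I_c`, per-block projections
`P_{M_c⊥}(B) = Pu_c B Pv_c` and `P_{M_c}(B) = B − Pu_c B Pv_c` (where `Pu_c`, `Pv_c`
are the orthogonal projections onto the orthogonal complements of the column and row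
spaces of `W★_c`, of rank `r_c`), if `Ŵ` minimizes the GAME objective over a feasible
set containing `W★`, `Δ := Ŵ − W★`, and `λ_c ≥ 2‖Ẽ^{(c)}‖_op` for every `c`, then
(i) `Σ_c λ_c ‖P_{M_c⊥}(Δ_c)‖_* ≤ 3 Σ_c λ_c ‖P_{M_c}(Δ_c)‖_*`, and
(ii) `(1/2)‖P_Ω(Δ)‖_F² ≤ (3/2) Σ_c λ_c ‖P_{M_c}(Δ_c)‖_*`. -/
theorem game_group_cone_constraint
    {n m : ℕ} {C : Type*} [Fintype C]
    (Wstar E : Matrix (Fin n) (Fin m) ℝ)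
    (Ω : Finset (Fin n × Fin m))
    (I : C → Finset (Fin n)) (hcover : ∀ i : Fin n, ∃ c, i ∈ I c)
    (lam : C → ℝ) (hlam : ∀ c, 0 ≤ lam c)
    (r : C → ℕ) (hr : ∀ c, (rowSub (I c) Wstar).rank = r c)
    (Pu : ∀ c : C, Matrix (I c) (I c) ℝ) (Pv : C → Matrix (Fin m) (Fin m) ℝ)
    (hPu_symm : ∀ c, (Pu c)ᵀ = Pu c) (hPu_idem : ∀ c, Pu c * Pu c = Pu c)
    (hPu_ker : ∀ c, ∀ x : I c → ℝ,
      Pu c *ᵥ x = 0 ↔ ∃ y : Fin m → ℝ, rowSub (I c) Wstar *ᵥ y = x)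
    (hPv_symm : ∀ c, (Pv c)ᵀ = Pv c) (hPv_idem : ∀ c, Pv c * Pv c = Pv c)
    (hPv_ker : ∀ c, ∀ x : Fin m → ℝ,
      Pv c *ᵥ x = 0 ↔ ∃ y : I c → ℝ, (rowSub (I c) Wstar)ᵀ *ᵥ y = x)
    (hlam_spec : ∀ c, 2 * opNorm (Matrix.of fun (i : I c) (j : Fin m) =>
        projObs Ω E i.1 j / (kappa I i.1 : ℝ)) ≤ lam c)
    (F : Set (Matrix (Fin n) (Fin m) ℝ)) (hWstarF : Wstar ∈ F)
    (What : Matrix (Fin n) (Fin m) ℝ) (hWhatF : What ∈ F)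
    (hmin : ∀ W ∈ F, gameObj Ω (Wstar + E) I lam What ≤ gameObj Ω (Wstar + E) I lam W) :
    (∑ c : C, lam c *
        nuclearNorm (Pu c * rowSub (I c) (What - Wstar) * Pv c) ≤
      3 * ∑ c : C, lam c *
        nuclearNorm (rowSub (I c) (What - Wstar) -
          Pu c * rowSub (I c) (What - Wstar) * Pv c)) ∧
    (1 / 2) * frobNorm (projObs Ω (What - Wstar)) ^ 2 ≤
      (3 / 2) * ∑ c : C, lam c *
        nuclearNorm (rowSub (I c) (What - Wstar) -
          Pu c * rowSub (I c) (What - Wstar) * Pv c) := by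
  classical
  set Δ := What - Wstar with hΔ
  -- structural facts about the projections and Wstar
  have hPuW : ∀ c, Pu c * rowSub (I c) Wstar = 0 := by
    intro c
    ext i j
    have hcol : Pu c *ᵥ (fun i' => rowSub (I c) Wstar i' j) = 0 := by
      refine (hPu_ker c _).mpr ⟨Pi.single j 1, ?_⟩
      ext i'
      simp [Matrix.mulVec, dotProduct, Pi.single_apply, mul_ite]
    exact congrFun hcol i
  have hWPv : ∀ c, rowSub (I c) Wstar * Pv c = 0 := by
    intro c
    have h2 : Pv c * (rowSub (I c) Wstar)ᵀ = 0 := by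
      ext j i
      have hcol : Pv c *ᵥ (fun j' => (rowSub (I c) Wstar)ᵀ j' i) = 0 := by
        refine (hPv_ker c _).mpr ⟨Pi.single i 1, ?_⟩
        ext j'
        simp [Matrix.mulVec, dotProduct, Pi.single_apply, mul_ite]
      exact congrFun hcol j
    have h3 := congrArg Matrix.transpose h2
    rwa [Matrix.transpose_mul, Matrix.transpose_transpose, hPv_symm, Matrix.transpose_zero] at h3
  -- basic inequality from minimality
  have hobj := hmin Wstar hWstarF
  unfold gameObj at hobj
  have hXW : Wstar + E - What = E - Δ := by rw [hΔ]; abel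
  have hXS : Wstar + E - Wstar = E := by abel
  rw [hXW, hXS] at hobj
  have hPlin : projObs Ω (E - Δ) = projObs Ω E - projObs Ω Δ := by
    ext i j
    simp only [projObs, Matrix.of_apply, Matrix.sub_apply]
    split_ifs with h <;> simp
  rw [hPlin] at hobj
  have hfrob : frobNorm (projObs Ω E - projObs Ω Δ) ^ 2
      = frobNorm (projObs Ω E) ^ 2 - 2 * GameAux.ip (projObs Ω E) Δ
        + frobNorm (projObs Ω Δ) ^ 2 := by
    rw [frobSq', frobSq', frobSq']
    unfold GameAux.ip
    have entry : ∀ i j, (projObs Ω E - projObs Ω Δ) i j ^ 2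
        = projObs Ω E i j ^ 2 - 2 * (projObs Ω E i j * Δ i j) + projObs Ω Δ i j ^ 2 := by
      intro i j
      simp only [projObs, Matrix.of_apply, Matrix.sub_apply]
      split_ifs with h <;> ring
    simp only [entry, Finset.sum_add_distrib, Finset.sum_sub_distrib, Finset.mul_sum]
  rw [hfrob] at hobj
  have hbasic : (1/2) * frobNorm (projObs Ω Δ) ^ 2
      ≤ GameAux.ip (projObs Ω E) Δ
        + (∑ c, lam c * nuclearNorm (rowSub (I c) Wstar)
           - ∑ c, lam c * nuclearNorm (rowSub (I c) What)) := by
    linarith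
  -- splitting the noise inner product over blocks
  have hkappa_pos : ∀ i : Fin n, 0 < (kappa I i : ℝ) := by
    intro i
    have ⟨c, hc⟩ := hcover i
    have : 0 < kappa I i := Finset.card_pos.mpr ⟨c, Finset.mem_filter.mpr ⟨Finset.mem_univ c, hc⟩⟩
    exact_mod_cast this
  have hsplit : GameAux.ip (projObs Ω E) Δ
      = ∑ c, GameAux.ip (Matrix.of fun (i : I c) (j : Fin m) =>
          projObs Ω E i.1 j / (kappa I i.1 : ℝ)) (rowSub (I c) Δ) := by
    set g : Fin n → ℝ := fun i => ∑ j, projObs Ω E i j * Δ i j with hg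
    have step1 : ∀ c, GameAux.ip (Matrix.of fun (i : I c) (j : Fin m) =>
        projObs Ω E i.1 j / (kappa I i.1 : ℝ)) (rowSub (I c) Δ)
        = ∑ i ∈ I c, g i / (kappa I i : ℝ) := by
      intro c
      unfold GameAux.ip
      rw [← Finset.sum_coe_sort (I c) (fun i => g i / (kappa I i : ℝ))]
      refine Finset.sum_congr rfl fun i' _ => ?_
      simp only [Matrix.of_apply, rowSub, hg]
      rw [Finset.sum_div]
      refine Finset.sum_congr rfl fun j _ => ?_
      ring
    simp only [step1]
    have step2 : ∀ c, ∑ i ∈ I c, g i / (kappa I i : ℝ)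
        = ∑ i : Fin n, if i ∈ I c then g i / (kappa I i : ℝ) else 0 := by
      intro c
      rw [Finset.sum_ite_mem, Finset.univ_inter]
    simp only [step2]
    rw [Finset.sum_comm]
    unfold GameAux.ip
    refine Finset.sum_congr rfl fun i _ => ?_
    rw [← Finset.sum_filter, Finset.sum_const, nsmul_eq_mul]
    show g i = (kappa I i : ℝ) * (g i / (kappa I i : ℝ))
    rw [mul_div_cancel₀ _ (hkappa_pos i).ne']
  -- per-block noise bound
  have hEbound : ∀ c, GameAux.ip (Matrix.of fun (i : I c) (j : Fin m) =>
      projObs Ω E i.1 j / (kappa I i.1 : ℝ)) (rowSub (I c) Δ)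
      ≤ (lam c / 2) * nuclearNorm (rowSub (I c) Δ) := by
    intro c
    calc GameAux.ip _ (rowSub (I c) Δ)
        ≤ opNorm (Matrix.of fun (i : I c) (j : Fin m) =>
            projObs Ω E i.1 j / (kappa I i.1 : ℝ)) * nuclearNorm (rowSub (I c) Δ) :=
          GameAux.ip_le _ _
      _ ≤ (lam c / 2) * nuclearNorm (rowSub (I c) Δ) := by
          refine mul_le_mul_of_nonneg_right ?_ (nuclearNorm_nonneg _)
          linarith [hlam_spec c]
  -- decomposability bound
  have hdec : ∀ c, nuclearNorm (rowSub (I c) Wstar) - nuclearNorm (rowSub (I c) What)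
      ≤ nuclearNorm (rowSub (I c) Δ - Pu c * rowSub (I c) Δ * Pv c)
        - nuclearNorm (Pu c * rowSub (I c) Δ * Pv c) := by
    intro c
    have hWD : rowSub (I c) What = rowSub (I c) Wstar + rowSub (I c) Δ := by
      ext i j
      simp [rowSub, hΔ, Matrix.sub_apply]
    have hz1 : Pu c * (Pu c * rowSub (I c) Δ * Pv c) = Pu c * rowSub (I c) Δ * Pv c := by
      rw [← Matrix.mul_assoc, ← Matrix.mul_assoc, hPu_idem c]
    have hz2 : (Pu c * rowSub (I c) Δ * Pv c) * Pv c = Pu c * rowSub (I c) Δ * Pv c := by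
      rw [Matrix.mul_assoc (Pu c * rowSub (I c) Δ), hPv_idem c]
    have hsp := GameAux.nuclear_split (rowSub (I c) Wstar) (Pu c * rowSub (I c) Δ * Pv c)
      (Pu c) (Pv c) (hPu_symm c) (hPu_idem c) (hPv_symm c) (hPv_idem c)
      (hPuW c) (hWPv c) hz1 hz2
    have htri : nuclearNorm (rowSub (I c) Wstar + Pu c * rowSub (I c) Δ * Pv c)
        ≤ nuclearNorm (rowSub (I c) Wstar + rowSub (I c) Δ)
          + nuclearNorm (rowSub (I c) Δ - Pu c * rowSub (I c) Δ * Pv c) := by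
      have heq : rowSub (I c) Wstar + Pu c * rowSub (I c) Δ * Pv c
          = (rowSub (I c) Wstar + rowSub (I c) Δ)
            + -(rowSub (I c) Δ - Pu c * rowSub (I c) Δ * Pv c) := by abel
      rw [heq]
      exact (GameAux.nuclear_triangle _ _).trans (by rw [GameAux.nuclear_neg])
    rw [hWD]
    linarith
  have htri2 : ∀ c, nuclearNorm (rowSub (I c) Δ)
      ≤ nuclearNorm (Pu c * rowSub (I c) Δ * Pv c)
        + nuclearNorm (rowSub (I c) Δ - Pu c * rowSub (I c) Δ * Pv c) := by
    intro c
    have heq : rowSub (I c) Δ = Pu c * rowSub (I c) Δ * Pv c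
        + (rowSub (I c) Δ - Pu c * rowSub (I c) Δ * Pv c) := by abel
    exact le_of_le_of_eq (le_of_eq (congrArg nuclearNorm heq)) rfl |>.trans
      (GameAux.nuclear_triangle _ _)
  -- assemble
  set S1 := ∑ c, lam c * nuclearNorm (Pu c * rowSub (I c) Δ * Pv c) with hS1
  set S2 := ∑ c, lam c * nuclearNorm (rowSub (I c) Δ - Pu c * rowSub (I c) Δ * Pv c) with hS2
  have hS1nn : 0 ≤ S1 :=
    Finset.sum_nonneg fun c _ => mul_nonneg (hlam c) (nuclearNorm_nonneg _)
  have hf : 0 ≤ (1/2) * frobNorm (projObs Ω Δ) ^ 2 := by positivity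
  have hsum1 : ∑ c, (lam c / 2) * nuclearNorm (rowSub (I c) Δ)
      ≤ (1/2) * S1 + (1/2) * S2 := by
    rw [hS1, hS2, Finset.mul_sum, Finset.mul_sum, ← Finset.sum_add_distrib]
    refine Finset.sum_le_sum fun c _ => ?_
    have := htri2 c
    have hl := hlam c
    nlinarith
  have hsum2 : ∑ c, lam c * nuclearNorm (rowSub (I c) Wstar)
      - ∑ c, lam c * nuclearNorm (rowSub (I c) What) ≤ S2 - S1 := by
    rw [hS1, hS2, ← Finset.sum_sub_distrib, ← Finset.sum_sub_distrib]
    refine Finset.sum_le_sum fun c _ => ?_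
    have := hdec c
    have hl := hlam c
    nlinarith
  have hEsum : GameAux.ip (projObs Ω E) Δ ≤ ∑ c, (lam c / 2) * nuclearNorm (rowSub (I c) Δ) := by
    rw [hsplit]
    exact Finset.sum_le_sum fun c _ => hEbound c
  constructor
  · linarith
  · linarith
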